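/- arXiv:1407.3760 — 3 statements merged into one kernel-verified Lean document; each statement's English description precedes it below -/
import Mathlib

section
/- Let (L,v) be an algebraically closed valued field extension of (K,v), b ∈ L×, e ∈ ℕ not divisible by the residue characteristic exponent, and c ∈ K with v(c b^e) = 0. Let a_0 ∈ L be an element integral over the valuation ring with residue a_0 v = (c b^e) v and v(a_0/(c b^e) − 1) > 0. Then there exists a_1 ∈ L with residue 1 and a_1^e = a_0/(c b^e), and setting a := a_1 b one has v(a − b) > v(b), v(a) = v(b), and c a^e = a_0 (hence (c a^e) v = (c b^e) v). -/
/-- core of Lemma 5.4: Let (L,v) be an algebraically closed valued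
field extension of (K,v), b ∈ L×, e a positive integer not divisible by the residue
characteristic exponent (expressed as: no prime q with v(q) > 0 divides e), c ∈ K
with v(c b^e) = 0, and a₀ ∈ L with residue a₀v = (c b^e)v, i.e. v(a₀/(c b^e) − 1) > 0.
Then there is a₁ ∈ L of residue 1 with a₁^e = a₀/(c b^e), and a := a₁ b satisfies
v(a − b) > v(b), v(a) = v(b) and c a^e = a₀. (Additive convention.) -/
theorem exists_strongly_homogeneous_approximation
    {L : Type*} [Field L] [IsAlgClosed L] (K : Subfield L)
    {Γ : Type*} [AddCommGroup Γ] [LinearOrder Γ] [IsOrderedAddMonoid Γ]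
    (v : AddValuation L (WithTop Γ))
    (b : L) (hb : b ≠ 0) (e : ℕ) (he : 0 < e)
    (hres : ∀ q : ℕ, q.Prime → 0 < v (q : L) → ¬ (q : ℕ) ∣ e)
    (c : K) (hcb : v ((c : L) * b ^ e) = 0)
    (a₀ : L) (ha₀ : 0 < v (a₀ / ((c : L) * b ^ e) - 1)) :
    ∃ a₁ : L, a₁ ^ e = a₀ / ((c : L) * b ^ e) ∧ 0 < v (a₁ - 1) ∧
      v (a₁ * b - b) > v b ∧ v (a₁ * b) = v b ∧ (c : L) * (a₁ * b) ^ e = a₀ := by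
  set u : L := a₀ / ((c : L) * b ^ e) with hu
  have hcb0 : (c : L) * b ^ e ≠ 0 := v.ne_top_iff.mp (by rw [hcb]; exact WithTop.zero_ne_top)
  have hvu : v u = 0 := by
    have := v.map_eq_of_lt_sub (x := (1:L)) (y := u) (by simpa using ha₀)
    simpa using this
  have hu0 : u ≠ 0 := v.ne_top_iff.mp (by rw [hvu]; exact WithTop.zero_ne_top)
  -- the polynomial X^e - u
  set P : Polynomial L := Polynomial.X ^ e - Polynomial.C u with hP
  have hPmonic : P.Monic := Polynomial.monic_X_pow_sub_C u he.ne'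
  have hP0 : P ≠ 0 := hPmonic.ne_zero
  have hsplits : P.Splits := IsAlgClosed.splits P
  have hprod : P = (P.roots.map fun r => Polynomial.X - Polynomial.C r).prod :=
    (Polynomial.prod_multiset_X_sub_C_of_monic_of_roots_card_eq hPmonic
      (Polynomial.splits_iff_card_roots.mp hsplits)).symm
  -- evaluate at 1
  have heval : (P.roots.map fun r => 1 - r).prod = 1 - u := by
    have := congrArg (Polynomial.eval 1) hprod
    simp only [hP, Polynomial.eval_multiset_prod, Multiset.map_map, Function.comp,
      Polynomial.eval_sub, Polynomial.eval_pow, Polynomial.eval_X, Polynomial.eval_C,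
      Polynomial.eval_one, one_pow] at this
    simpa using this.symm
  -- valuation of product positive
  have hvprod : 0 < v ((P.roots.map fun r => 1 - r).prod) := by
    rw [heval, v.map_sub_swap]
    exact ha₀
  -- find root with v(1 - r) > 0
  have hexists : ∃ r ∈ P.roots, 0 < v (1 - r) := by
    by_contra hcon
    push_neg at hcon
    have key : ∀ (s : Multiset L), (∀ x ∈ s, v x ≤ 0) → v s.prod ≤ 0 := by
      intro s
      induction s using Multiset.induction with
      | empty => intro _; simp
      | cons a s ih =>
        intro h
        rw [Multiset.prod_cons, v.map_mul]
        have := add_le_add (h a (Multiset.mem_cons_self a s))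
          (ih fun x hx => h x (Multiset.mem_cons_of_mem hx))
        simpa using this
    have := key _ (fun x hx => by
      obtain ⟨r, hr, rfl⟩ := Multiset.mem_map.mp hx
      exact hcon r hr)
    exact absurd hvprod this.not_gt
  obtain ⟨r, hrmem, hrv⟩ := hexists
  have hre : r ^ e = u := by
    have := Polynomial.isRoot_of_mem_roots hrmem
    rw [hP] at this
    simpa [sub_eq_zero] using this
  have hv1r : 0 < v (r - 1) := by rwa [v.map_sub_swap] at hrv
  have hvr : v r = 0 := by
    have := v.map_eq_of_lt_sub (x := (1:L)) (y := r) (by simpa using hv1r)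
    simpa using this
  refine ⟨r, hre, hv1r, ?_, ?_, ?_⟩
  · have hvb : v b ≠ ⊤ := v.ne_top_iff.mpr hb
    calc v (r * b - b) = v ((r - 1) * b) := by ring_nf
    _ = v (r - 1) + v b := v.map_mul _ _
    _ > v b := by
        have h2 : (0 : WithTop Γ) + v b < v (r - 1) + v b :=
          WithTop.add_lt_add_right hvb hv1r
        rwa [zero_add] at h2
  · rw [v.map_mul, hvr, zero_add]
  · field_simp [hu, mul_pow, hre]
    rw [mul_pow, ← mul_assoc, hre, hu, mul_assoc, mul_comm _ (b ^ e), ← mul_assoc, mul_div_assoc']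
    exact mul_div_cancel_left₀ a₀ hcb0
end

section
/- Let (K,v) be a valued field and F = K(x_1,…,x_n) with a valuation v extending that of K. Then trdeg(F|K) = n ≥ rr(vF/vK) + trdeg(Fv|Kv), where rr denotes rational rank of the quotient group vF/vK. -/
set_option synthInstance.maxHeartbeats 400000


open IsLocalRing

section Counting

open MvPolynomial

set_option maxHeartbeats 1000000 in
/-- Any algebraically independent family in a rational function field in `n` variables
has at most `n` elements.  Proved by a dimension count on monomials. -/
private lemma aux_count {K F : Type*} [Field K] [Field F] [Algebra K F]
    {n m : ℕ} {x : Fin n → F} (hx : AlgebraicIndependent K x)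
    (hgen : IntermediateField.adjoin K (Set.range x) = ⊤)
    {z : Fin m → F} (hz : AlgebraicIndependent K z) : m ≤ n := by
  classical
  by_contra hmn
  push_neg at hmn
  have haev : Function.Injective (aeval x : MvPolynomial (Fin n) K →ₐ[K] F) :=
    algebraicIndependent_iff_injective_aeval.mp hx
  -- represent each z i as a quotient of polynomials in the x's
  have hrep : ∀ i : Fin m, ∃ p : MvPolynomial (Fin n) K, ∃ q : MvPolynomial (Fin n) K,
      q ≠ 0 ∧ z i * aeval x q = aeval x p := by
    intro i
    have hzi : z i ∈ IntermediateField.adjoin K (Set.range x) := by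
      rw [hgen]; trivial
    obtain ⟨⟨a, b⟩, hab⟩ := IsLocalization.surj (nonZeroDivisors (MvPolynomial (Fin n) K))
      (hx.aevalEquivField.symm ⟨z i, hzi⟩)
    have h2 := congrArg hx.aevalEquivField hab
    rw [map_mul, AlgEquiv.apply_symm_apply] at h2
    have h3 := congrArg
      (fun w : ↥(IntermediateField.adjoin K (Set.range x)) => (w : F)) h2
    push_cast at h3
    rw [hx.aevalEquivField_algebraMap_apply_coe, hx.aevalEquivField_algebraMap_apply_coe] at h3
    exact ⟨a, b, mem_nonZeroDivisors_iff_ne_zero.mp b.2, h3⟩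
  choose p q hq hzq using hrep
  -- degree bound
  set D : ℕ := Finset.univ.sup fun i : Fin m => max (p i).totalDegree (q i).totalDegree with hD
  have hpD : ∀ i, (p i).totalDegree ≤ D := fun i =>
    le_trans (le_max_left _ _) (Finset.le_sup
      (f := fun i : Fin m => max (p i).totalDegree (q i).totalDegree) (Finset.mem_univ i))
  have hqD : ∀ i, (q i).totalDegree ≤ D := fun i =>
    le_trans (le_max_right _ _) (Finset.le_sup
      (f := fun i : Fin m => max (p i).totalDegree (q i).totalDegree) (Finset.mem_univ i))
  set C : ℕ := m ^ 2 * D + 1 with hC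
  set d : ℕ := C ^ n + 1 with hd
  have hd2 : 2 ≤ d := by
    have : 1 ≤ C ^ n := Nat.one_le_pow _ _ (Nat.succ_pos _)
    omega
  set s : ℕ := m * (d - 1) with hs
  set E : ℕ := m * (s * D) with hE
  have hm1 : 1 ≤ m := le_trans (Nat.succ_le_succ (Nat.zero_le n)) hmn
  have hαs : ∀ α : Fin m → Fin d, ∀ i, (α i : ℕ) ≤ s := by
    intro α i
    have h1 : (α i : ℕ) ≤ d - 1 := Nat.le_sub_one_of_lt (α i).isLt
    calc (α i : ℕ) ≤ d - 1 := h1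
      _ = 1 * (d - 1) := (one_mul _).symm
      _ ≤ m * (d - 1) := Nat.mul_le_mul_right _ hm1
  -- the numerator polynomials
  set N : (Fin m → Fin d) → MvPolynomial (Fin n) K :=
    fun α => ∏ i, (p i) ^ (α i : ℕ) * (q i) ^ (s - (α i : ℕ)) with hN
  have hdegN : ∀ α, (N α).totalDegree ≤ E := by
    intro α
    calc (N α).totalDegree ≤ ∑ i, ((p i) ^ (α i : ℕ) * (q i) ^ (s - (α i : ℕ))).totalDegree :=
          totalDegree_finset_prod _ _
      _ ≤ ∑ _i : Fin m, s * D := by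
          refine Finset.sum_le_sum fun i _ => ?_
          calc ((p i) ^ (α i : ℕ) * (q i) ^ (s - (α i : ℕ))).totalDegree
              ≤ ((p i) ^ (α i : ℕ)).totalDegree + ((q i) ^ (s - (α i : ℕ))).totalDegree :=
                totalDegree_mul _ _
            _ ≤ (α i : ℕ) * (p i).totalDegree + (s - (α i : ℕ)) * (q i).totalDegree :=
                Nat.add_le_add (totalDegree_pow _ _) (totalDegree_pow _ _)
            _ ≤ (α i : ℕ) * D + (s - (α i : ℕ)) * D :=
                Nat.add_le_add (Nat.mul_le_mul_left _ (hpD i)) (Nat.mul_le_mul_left _ (hqD i))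
            _ = ((α i : ℕ) + (s - (α i : ℕ))) * D := (Nat.add_mul _ _ _).symm
            _ = s * D := by rw [Nat.add_sub_cancel' (hαs α i)]
      _ = m * (s * D) := by simp [Finset.sum_const, Finset.card_univ, Nat.mul_comm]
  set u : F := aeval x (∏ i, q i) with hu
  have hu0 : u ≠ 0 := by
    intro h
    have : (∏ i, q i) = 0 := haev (h.trans (map_zero _).symm)
    exact (Finset.prod_ne_zero_iff.mpr fun i _ => hq i) this
  -- the key identity
  have hkey : ∀ α : Fin m → Fin d, (∏ i, z i ^ (α i : ℕ)) * u ^ s = aeval x (N α) := by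
    intro α
    have hpoint : ∀ i : Fin m, z i ^ (α i : ℕ) * (aeval x (q i)) ^ s
        = (aeval x (p i)) ^ (α i : ℕ) * (aeval x (q i)) ^ (s - (α i : ℕ)) := by
      intro i
      have h1 : (aeval x (q i)) ^ s
          = (aeval x (q i)) ^ (α i : ℕ) * (aeval x (q i)) ^ (s - (α i : ℕ)) := by
        rw [← pow_add, Nat.add_sub_cancel' (hαs α i)]
      rw [h1, ← mul_assoc, ← mul_pow, hzq i]
    calc (∏ i, z i ^ (α i : ℕ)) * u ^ s
        = (∏ i, z i ^ (α i : ℕ)) * ∏ i, (aeval x (q i)) ^ s := by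
          rw [hu, map_prod, ← Finset.prod_pow]
      _ = ∏ i, (z i ^ (α i : ℕ) * (aeval x (q i)) ^ s) := by
          rw [Finset.prod_mul_distrib]
      _ = ∏ i, ((aeval x (p i)) ^ (α i : ℕ) * (aeval x (q i)) ^ (s - (α i : ℕ))) :=
          Finset.prod_congr rfl fun i _ => hpoint i
      _ = aeval x (N α) := by
          rw [hN]
          rw [map_prod]
          exact Finset.prod_congr rfl fun i _ => by rw [map_mul, map_pow, map_pow]
  -- linear independence of the monomial family
  set g : (Fin m → Fin d) → F := fun α => (∏ i, z i ^ (α i : ℕ)) * u ^ s with hg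
  have hgli : LinearIndependent K g := by
    have hb : LinearIndependent K (fun f : Fin m →₀ ℕ => (monomial f (1 : K))) := by
      have := (basisMonomials (Fin m) K).linearIndependent
      rwa [coe_basisMonomials] at this
    set e : (Fin m → Fin d) → (Fin m →₀ ℕ) :=
      fun α => Finsupp.equivFunOnFinite.symm (fun i => (α i : ℕ)) with he
    have he_inj : Function.Injective e := by
      intro α β h
      have := congrArg Finsupp.equivFunOnFinite h
      simp only [he, Equiv.apply_symm_apply] at this
      funext i
      exact Fin.val_injective (congrFun this i)
    have h1 : LinearIndependent K (fun α : Fin m → Fin d => (monomial (e α) (1 : K))) :=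
      hb.comp e he_inj
    set T : MvPolynomial (Fin m) K →ₗ[K] F :=
      (LinearMap.mulRight K (u ^ s)).comp (aeval z).toLinearMap with hT
    have hT_inj : LinearMap.ker T = ⊥ := by
      rw [LinearMap.ker_eq_bot]
      intro r r' hh
      simp only [hT, LinearMap.coe_comp, Function.comp_apply, AlgHom.toLinearMap_apply,
        LinearMap.mulRight_apply] at hh
      exact (algebraicIndependent_iff_injective_aeval.mp hz)
        (mul_right_cancel₀ (pow_ne_zero _ hu0) hh)
    have h2 := h1.map' T hT_inj
    have h3 : (⇑T ∘ fun α : Fin m → Fin d => (monomial (e α) (1 : K))) = g := by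
      funext α
      simp only [hT, Function.comp_apply, LinearMap.coe_comp, AlgHom.toLinearMap_apply,
        LinearMap.mulRight_apply, hg]
      congr 1
      rw [aeval_monomial, map_one, one_mul, Finsupp.prod_pow]
      refine Finset.prod_congr rfl fun i _ => ?_
      simp [he]
    rwa [h3] at h2
  -- the spanning family
  set w : (Fin n → Fin (E + 1)) → F :=
    fun b => aeval x (monomial (Finsupp.equivFunOnFinite.symm fun i => (b i : ℕ)) (1 : K)) with hw
  have hmem : ∀ α, g α ∈ Submodule.span K (Set.range w) := by
    intro α
    rw [hg]
    show (∏ i, z i ^ (α i : ℕ)) * u ^ s ∈ _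
    rw [hkey α]
    have hNsum : aeval x (N α)
        = ∑ β ∈ (N α).support, coeff β (N α) • aeval x (monomial β (1 : K)) := by
      conv_lhs => rw [← support_sum_monomial_coeff (N α)]
      rw [map_sum]
      refine Finset.sum_congr rfl fun β hβ => ?_
      rw [← map_smul, smul_monomial, smul_eq_mul, mul_one]
    rw [hNsum]
    refine Submodule.sum_mem _ fun β hβ => ?_
    have hβE : ∀ i, (β i : ℕ) < E + 1 := by
      intro i
      have h1 : (β.sum fun _ e => e) ≤ (N α).totalDegree := le_totalDegree hβ
      have h2 : β i ≤ β.sum fun _ e => e := by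
        by_cases hi : i ∈ β.support
        · exact Finset.single_le_sum (fun j _ => Nat.zero_le _) hi
        · simp [Finsupp.notMem_support_iff.mp hi]
      have := le_trans h2 (le_trans h1 (hdegN α))
      omega
    refine Submodule.smul_mem _ _ (Submodule.subset_span ?_)
    refine ⟨fun i => ⟨β i, hβE i⟩, ?_⟩
    show aeval x (monomial (Finsupp.equivFunOnFinite.symm
      fun i => ((⟨β i, hβE i⟩ : Fin (E + 1)) : ℕ)) (1 : K)) = aeval x (monomial β 1)
    have hββ : Finsupp.equivFunOnFinite.symm
        (fun i => ((⟨β i, hβE i⟩ : Fin (E + 1)) : ℕ)) = β := by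
      have hfns : (fun i => ((⟨β i, hβE i⟩ : Fin (E + 1)) : ℕ)) = ⇑β := rfl
      rw [hfns, Finsupp.equivFunOnFinite_symm_coe]
    rw [hββ]
  -- counting
  have hfin : FiniteDimensional K (Submodule.span K (Set.range w)) :=
    FiniteDimensional.span_of_finite K (Set.finite_range w)
  set W := Submodule.span K (Set.range w) with hW
  set g' : (Fin m → Fin d) → W := fun α => ⟨g α, hmem α⟩ with hg'
  have hg'li : LinearIndependent K g' := by
    have : W.subtype ∘ g' = g := rfl
    exact LinearIndependent.of_comp W.subtype (by rwa [this])
  have hcard1 : Fintype.card (Fin m → Fin d) ≤ Module.finrank K W :=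
    hg'li.fintype_card_le_finrank
  have hcard2 : Module.finrank K W ≤ Fintype.card (Fin n → Fin (E + 1)) := by
    refine le_trans (finrank_span_le_card (Set.range w)) ?_
    rw [Set.toFinset_range]
    exact le_trans (Finset.card_image_le) (by simp)
  have hcount : d ^ m ≤ (E + 1) ^ n := by
    have := le_trans hcard1 hcard2
    simpa [Fintype.card_fun, Fintype.card_fin] using this
  -- arithmetic contradiction
  have hE1 : E + 1 ≤ C * (d - 1) := by
    have h1 : E = m ^ 2 * D * (d - 1) := by
      rw [hE, hs]; ring
    have h2 : 1 ≤ d - 1 := by omega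
    calc E + 1 = m ^ 2 * D * (d - 1) + 1 := by rw [h1]
      _ ≤ m ^ 2 * D * (d - 1) + (d - 1) := by omega
      _ = (m ^ 2 * D + 1) * (d - 1) := by ring
      _ = C * (d - 1) := by rw [hC]
  have hfinal : (E + 1) ^ n < d ^ m := by
    calc (E + 1) ^ n ≤ (C * (d - 1)) ^ n := Nat.pow_le_pow_left hE1 n
      _ = C ^ n * (d - 1) ^ n := by rw [Nat.mul_pow]
      _ ≤ C ^ n * d ^ n := by
          exact Nat.mul_le_mul_left _ (Nat.pow_le_pow_left (Nat.sub_le _ _) n)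
      _ < d * d ^ n := by
          have hdn : 0 < d ^ n := pow_pos (by omega) n
          have hCd : C ^ n < d := by omega
          exact mul_lt_mul_of_pos_right hCd hdn
      _ = d ^ (n + 1) := by rw [Nat.pow_succ]; ring
      _ ≤ d ^ m := Nat.pow_le_pow_right (by omega) hmn
  omega

end Counting


section Valuation

open MvPolynomial

set_option maxHeartbeats 1000000 in
/-- If the residues of the `y j` are algebraically independent over the residue field of `vK`,
then the value of a polynomial expression in the `y j` with coefficients in `K` equals the
value of its "biggest" coefficient. -/
private lemma claimA {K F : Type*} [Field K] [Field F] [Algebra K F]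
    {Γ₀ : Type*} [LinearOrderedCommGroupWithZero Γ₀]
    (v : Valuation F Γ₀) (vK : Valuation K Γ₀) [Valuation.HasExtension vK v]
    {τ : ℕ} (y : Fin τ → v.integer)
    (hy : AlgebraicIndependent (ResidueField vK.integer)
      (fun i => residue v.integer (y i)))
    (c : MvPolynomial (Fin τ) K) (hc : c ≠ 0) :
    ∃ a : K, a ≠ 0 ∧
      v (aeval (fun j => ((y j : F))) c) = v (algebraMap K F a) := by
  classical
  set yc : Fin τ → F := fun j => ((y j : F)) with hyc
  have hsupp : c.support.Nonempty := support_nonempty.mpr hc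
  obtain ⟨l₀, hl₀, hmax⟩ := Finset.exists_max_image c.support (fun l => vK (c.coeff l)) hsupp
  set a : K := c.coeff l₀ with ha_def
  have ha : a ≠ 0 := mem_support_iff.mp hl₀
  have hva : vK a ≠ 0 := fun h => ha (vK.zero_iff.mp h)
  refine ⟨a, ha, ?_⟩
  have hcoeff : ∀ l, vK (a⁻¹ * c.coeff l) ≤ 1 := by
    intro l
    by_cases hl : l ∈ c.support
    · rw [map_mul, map_inv₀]
      calc (vK a)⁻¹ * vK (c.coeff l) ≤ (vK a)⁻¹ * vK a :=
            mul_le_mul_right (hmax l hl) _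
        _ = 1 := inv_mul_cancel₀ hva
    · rw [notMem_support_iff.mp hl, mul_zero, map_zero]
      exact zero_le_one
  set c' : MvPolynomial (Fin τ) vK.integer :=
    ∑ l ∈ c.support, monomial l (⟨a⁻¹ * c.coeff l, hcoeff l⟩ : vK.integer) with hc'
  have hc'map : MvPolynomial.map (algebraMap vK.integer K) c' = C a⁻¹ * c := by
    rw [hc', map_sum (MvPolynomial.map (algebraMap vK.integer K))]
    conv_rhs => rw [← support_sum_monomial_coeff c]
    rw [Finset.mul_sum]
    refine Finset.sum_congr rfl fun l hl => ?_
    rw [map_monomial, C_mul_monomial]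
    rfl
  set u : v.integer := aeval y c' with hu
  -- the coefficient of `c'` at `l₀` is 1
  have hc'l₀ : c'.coeff l₀ = 1 := by
    rw [hc', coeff_sum]
    have : ∀ l ∈ c.support,
        (monomial l (⟨a⁻¹ * c.coeff l, hcoeff l⟩ : vK.integer)).coeff l₀
        = if l = l₀ then (⟨a⁻¹ * c.coeff l, hcoeff l⟩ : vK.integer) else 0 := by
      intro l _
      rw [coeff_monomial]
    rw [Finset.sum_congr rfl this, Finset.sum_ite_eq' c.support l₀]
    simp only [hl₀, if_true]
    exact Subtype.ext (inv_mul_cancel₀ ha)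
  -- residue computation
  have hcomm : (residue v.integer).comp (algebraMap vK.integer v.integer)
      = (algebraMap (ResidueField vK.integer) (ResidueField v.integer)).comp
        (residue vK.integer) := by
    ext r
    show residue v.integer (algebraMap vK.integer v.integer r)
      = algebraMap (ResidueField vK.integer) (ResidueField v.integer) (residue vK.integer r)
    have : algebraMap (ResidueField vK.integer) (ResidueField v.integer)
        = ResidueField.map (algebraMap vK.integer v.integer) := rfl
    rw [this, ResidueField.map_residue]
  have hres : residue v.integer u
      = aeval (fun i => residue v.integer (y i))
          (MvPolynomial.map (residue vK.integer) c') := by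
    rw [hu, aeval_def, eval₂_comp_left (residue v.integer), aeval_def, eval₂_map, hcomm]
    rfl
  have hru : residue v.integer u ≠ 0 := by
    rw [hres]
    intro h0
    have hzero := algebraicIndependent_iff.mp hy _ h0
    have : (MvPolynomial.map (residue vK.integer) c').coeff l₀ = 1 := by
      rw [coeff_map, hc'l₀, map_one]
    rw [hzero] at this
    simp at this
  have hunit : IsUnit u := (residue_ne_zero_iff_isUnit u).mp hru
  have hvu : v (u : F) = 1 := by
    have h1 := (Valuation.integer.integers (v := v)).isUnit_iff_valuation_eq_one.mp hunit
    exact h1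
  -- value computation
  have hcoe : ((u : F)) = aeval yc (MvPolynomial.map (algebraMap vK.integer K) c') := by
    rw [hu]
    show (v.integer.subtype) (aeval y c') = _
    rw [aeval_def, eval₂_comp_left (v.integer.subtype), aeval_def, eval₂_map]
    have hfg : (v.integer.subtype).comp (algebraMap vK.integer v.integer)
        = (algebraMap K F).comp (algebraMap vK.integer K) := by
      ext r
      show (algebraMap vK.integer v.integer r : F) = algebraMap K F (algebraMap vK.integer K r)
      rw [Valuation.HasExtension.val_algebraMap]
      rfl
    rw [hfg]
    rfl
  rw [hc'map] at hcoe
  have hcoe2 : (u : F) = algebraMap K F a⁻¹ * aeval yc c := by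
    rw [hcoe, map_mul, aeval_C]
  have heq : aeval yc c = algebraMap K F a * (u : F) := by
    rw [hcoe2, ← mul_assoc, ← map_mul, mul_inv_cancel₀ ha, map_one, one_mul]
  rw [heq, map_mul, hvu, mul_one]

set_option maxHeartbeats 1000000 in
/-- The combined family of the `γ i` and the `y j` is algebraically independent over `K`. -/
private lemma combined {K F : Type*} [Field K] [Field F] [Algebra K F]
    {Γ₀ : Type*} [LinearOrderedCommGroupWithZero Γ₀]
    (v : Valuation F Γ₀) (vK : Valuation K Γ₀) [Valuation.HasExtension vK v]
    {ρ τ : ℕ} (γ : Fin ρ → F) (hγ0 : ∀ i, γ i ≠ 0)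
    (hγ : ∀ m : Fin ρ → ℤ,
      (∃ c : K, c ≠ 0 ∧ (∏ i, (v (γ i)) ^ (m i)) = v (algebraMap K F c)) →
      ∀ i, m i = 0)
    (y : Fin τ → v.integer)
    (hy : AlgebraicIndependent (ResidueField vK.integer)
      (fun i => residue v.integer (y i))) :
    AlgebraicIndependent K (Sum.elim γ (fun j => ((y j : F)))) := by
  classical
  set yc : Fin τ → F := fun j => ((y j : F)) with hyc
  rw [algebraicIndependent_iff]
  intro p hp
  by_contra hp0
  set q := sumToIter K (Fin ρ) (Fin τ) p with hqdef
  have hq0 : q ≠ 0 := by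
    intro h
    apply hp0
    have hq' : (sumAlgEquiv K (Fin ρ) (Fin τ)) p = 0 := by
      have heq : (sumToIter K (Fin ρ) (Fin τ))
          = ((sumAlgEquiv K (Fin ρ) (Fin τ)) : MvPolynomial (Fin ρ ⊕ Fin τ) K →+*
              MvPolynomial (Fin ρ) (MvPolynomial (Fin τ) K)) := by
        apply ringHom_ext
        · intro r
          simp [sumToIter_C, sumAlgEquiv_C_inl]
        · rintro (i | j) <;> simp [sumToIter_Xl, sumToIter_Xr, sumAlgEquiv_X_inl, sumAlgEquiv_X_inr]
      exact (DFunLike.congr_fun heq p).symm.trans h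
    exact (map_eq_zero_iff _ (AlgEquiv.injective _)).mp hq'
  -- evaluation as a sum over the support of q
  have hhom : ((aeval (Sum.elim γ yc) : MvPolynomial (Fin ρ ⊕ Fin τ) K →ₐ[K] F) :
        MvPolynomial (Fin ρ ⊕ Fin τ) K →+* F)
      = (eval₂Hom ((aeval yc : MvPolynomial (Fin τ) K →ₐ[K] F) :
          MvPolynomial (Fin τ) K →+* F) γ).comp (sumToIter K (Fin ρ) (Fin τ)) := by
    apply ringHom_ext
    · intro r
      simp [sumToIter_C]
    · rintro (i | j) <;> simp [sumToIter_Xl, sumToIter_Xr]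
  set term : (Fin ρ →₀ ℕ) → F :=
    fun k => aeval yc (q.coeff k) * ∏ i ∈ k.support, γ i ^ k i with hterm
  have hsum : aeval (Sum.elim γ yc) p = ∑ k ∈ q.support, term k := by
    have h1 := DFunLike.congr_fun hhom p
    have h2 : aeval (Sum.elim γ yc) p
        = eval₂ ((aeval yc : MvPolynomial (Fin τ) K →ₐ[K] F) :
            MvPolynomial (Fin τ) K →+* F) γ q := h1
    rw [h2, eval₂_eq]
    rfl
  -- values of the terms
  have hγv : ∀ i, v (γ i) ≠ 0 := fun i => v.ne_zero_iff.mpr (hγ0 i)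
  set V : (Fin ρ →₀ ℕ) → Γ₀ := fun k => ∏ i, v (γ i) ^ (k i) with hV
  have hVne : ∀ k, V k ≠ 0 := by
    intro k
    rw [hV]
    exact Finset.prod_ne_zero_iff.mpr fun i _ => pow_ne_zero _ (hγv i)
  have hVterm : ∀ k : Fin ρ →₀ ℕ, v (∏ i ∈ k.support, γ i ^ k i) = V k := by
    intro k
    rw [map_prod]
    simp_rw [map_pow]
    exact Finset.prod_subset (Finset.subset_univ _) (fun i _ hi => by
      rw [Finsupp.notMem_support_iff.mp hi, pow_zero])
  have hA : ∀ k ∈ q.support, ∃ a : K, a ≠ 0 ∧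
      v (aeval yc (q.coeff k)) = v (algebraMap K F a) :=
    fun k hk => claimA v vK y hy (q.coeff k) (mem_support_iff.mp hk)
  choose a haz hav using hA
  have halg : ∀ (b : K), b ≠ 0 → v (algebraMap K F b) ≠ 0 := by
    intro b hb
    rw [v.ne_zero_iff]
    exact fun h => hb ((map_eq_zero_iff _ (algebraMap K F).injective).mp h)
  have hterm_val : ∀ k (hk : k ∈ q.support),
      v (term k) = v (algebraMap K F (a k hk)) * V k := by
    intro k hk
    rw [hterm]
    show v (aeval yc (q.coeff k) * ∏ i ∈ k.support, γ i ^ k i) = _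
    rw [map_mul, hav k hk, hVterm]
  have hterm0 : ∀ k (hk : k ∈ q.support), v (term k) ≠ 0 := by
    intro k hk
    rw [hterm_val k hk]
    exact mul_ne_zero (halg _ (haz k hk)) (hVne k)
  -- distinct terms have distinct values
  have hinj : ∀ k (hk : k ∈ q.support), ∀ k' (hk' : k' ∈ q.support),
      v (term k) = v (term k') → k = k' := by
    intro k hk k' hk' h
    rw [hterm_val k hk, hterm_val k' hk'] at h
    have key : (∏ i, v (γ i) ^ ((k i : ℤ) - (k' i : ℤ)))
        = v (algebraMap K F (a k' hk' / a k hk)) := by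
      have h1 : ∀ i : Fin ρ, v (γ i) ^ ((k i : ℤ) - (k' i : ℤ))
          = v (γ i) ^ (k i) / v (γ i) ^ (k' i) := by
        intro i
        rw [zpow_sub₀ (hγv i), zpow_natCast, zpow_natCast]
      rw [Finset.prod_congr rfl (fun i _ => h1 i), Finset.prod_div_distrib]
      have h2 : V k / V k' = v (algebraMap K F (a k' hk')) / v (algebraMap K F (a k hk)) := by
        rw [div_eq_div_iff (hVne k') (halg _ (haz k hk))]
        rw [mul_comm (V k) _]
        exact h
      rw [hV] at h2
      rw [h2, map_div₀, map_div₀]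
    have hc0 : a k' hk' / a k hk ≠ 0 := div_ne_zero (haz k' hk') (haz k hk)
    have hz := hγ _ ⟨_, hc0, key⟩
    ext i
    have := hz i
    omega
  -- conclude
  obtain ⟨k₀, hk₀, hmax⟩ := Finset.exists_max_image q.support (fun k => v (term k))
    (support_nonempty.mpr hq0)
  have hrest : v (∑ k ∈ q.support.erase k₀, term k) < v (term k₀) := by
    refine v.map_sum_lt (hterm0 k₀ hk₀) fun k hk => ?_
    refine lt_of_le_of_ne (hmax k (Finset.mem_of_mem_erase hk)) fun heq => ?_
    exact (Finset.ne_of_mem_erase hk) (hinj k (Finset.mem_of_mem_erase hk) k₀ hk₀ heq)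
  have hfinal : v (aeval (Sum.elim γ yc) p) = v (term k₀) := by
    rw [hsum, ← Finset.add_sum_erase _ _ hk₀]
    exact v.map_add_eq_of_lt_left hrest
  rw [hp, map_zero] at hfinal
  exact hterm0 k₀ hk₀ hfinal.symm

end Valuation

/-- Abhyankar inequality for rational function fields:
Let (K,v) be a valued field and F = K(x_1,…,x_n) a rational function field in n
variables (encoded: the x_i are algebraically independent and generate F over K),
with a valuation v on F extending that of K.  Then
n ≥ rr(vF/vK) + trdeg(Fv|Kv): for any ρ elements of F whose values are rationally
independent modulo vK and any τ integral elements of F whose residues are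
algebraically independent over the residue field Kv, one has ρ + τ ≤ n. -/
theorem abhyankar_inequality_rational_function_field
    {K F : Type*} [Field K] [Field F] [Algebra K F]
    {Γ₀ : Type*} [LinearOrderedCommGroupWithZero Γ₀]
    (v : Valuation F Γ₀) (vK : Valuation K Γ₀) [Valuation.HasExtension vK v]
    (n : ℕ) (x : Fin n → F)
    (hx : AlgebraicIndependent K x)
    (hgen : IntermediateField.adjoin K (Set.range x) = ⊤)
    (ρ τ : ℕ)
    (γ : Fin ρ → F) (hγ0 : ∀ i, γ i ≠ 0)
    (hγ : ∀ m : Fin ρ → ℤ,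
      (∃ c : K, c ≠ 0 ∧ (∏ i, (v (γ i)) ^ (m i)) = v (algebraMap K F c)) →
      ∀ i, m i = 0)
    (y : Fin τ → v.integer)
    (hy : AlgebraicIndependent (ResidueField vK.integer)
      (fun i => residue v.integer (y i))) :
    ρ + τ ≤ n := by
  have hcomb := combined v vK γ hγ0 hγ y hy
  have hz : AlgebraicIndependent K
      ((Sum.elim γ (fun j => ((y j : F)))) ∘ ⇑finSumFinEquiv.symm) :=
    hcomb.comp _ (Equiv.injective _)
  exact aux_count hx hgen hz
end

section
/- Let (K,v) be a henselian valued field and a ∈ L \ K an element of a valued field extension such that a is strongly homogeneous over (K,v): a is separable-algebraic over K, the extension of v to K(a) is unique, and v(a) = kras(a,K) := max{ v(τa − σa) : σ, τ ∈ Gal(K), τa ≠ σa }. Then for any d ∈ K and any b in a valued extension field with v(b − d − a) > v(b − d), the element a + d lies in the henselization of K(b) with respect to every extension of v from K(a,b) to the algebraic closure of K(b). -/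
open IntermediateField

/-- The additive valuation of a multiset product is the sum of the valuations. -/
private lemma addval_multiset_prod {L Γ : Type*} [Field L] [AddCommGroup Γ] [LinearOrder Γ] [IsOrderedAddMonoid Γ]
    (v : AddValuation L (WithTop Γ)) (s : Multiset L) :
    v s.prod = (s.map (fun x => v x)).sum := by
  induction s using Multiset.induction_on with
  | empty => simp
  | cons a s ih => simp [ih]

/-- For `a` integral over `K`, some positive power of `a` has the same value as an
element of `K`. -/
private lemma exists_pow_val_eq {K L Γ : Type*} [Field K] [Field L] [Algebra K L]
    [AddCommGroup Γ] [LinearOrder Γ] [IsOrderedAddMonoid Γ] (v : AddValuation L (WithTop Γ))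
    {a : L} (ha_int : IsIntegral K a) (ha0 : a ≠ 0) :
    ∃ n : ℕ, 0 < n ∧ ∃ k : K, k ≠ 0 ∧ v (a ^ n) = v (algebraMap K L k) := by
  classical
  set f := minpoly K a with hf
  have hf0 : f ≠ 0 := minpoly.ne_zero ha_int
  set g : ℕ → WithTop Γ := fun i => v (algebraMap K L (f.coeff i) * a ^ i) with hg
  have hterm_ne : ∀ i ∈ f.support, algebraMap K L (f.coeff i) * a ^ i ≠ 0 := by
    intro i hi
    have hc : f.coeff i ≠ 0 := Polynomial.mem_support_iff.mp hi
    have hc' : algebraMap K L (f.coeff i) ≠ 0 := fun h =>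
      hc ((algebraMap K L).injective (by rw [h, map_zero]))
    exact mul_ne_zero hc' (pow_ne_zero _ ha0)
  have hg_ne_top : ∀ i ∈ f.support, g i ≠ ⊤ := fun i hi =>
    v.ne_top_iff.mpr (hterm_ne i hi)
  have hsne : f.support.Nonempty := Polynomial.nonempty_support_iff.mpr hf0
  obtain ⟨i₀, hi₀, hmin⟩ := f.support.exists_min_image g hsne
  have hsum : ∑ i ∈ f.support, algebraMap K L (f.coeff i) * a ^ i = 0 := by
    have h := minpoly.aeval K a
    rwa [Polynomial.aeval_def, Polynomial.eval₂_eq_sum, Polynomial.sum_def, ← hf] at h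
  -- there is a second index attaining the minimum
  have hex : ∃ j ∈ f.support, j ≠ i₀ ∧ g j = g i₀ := by
    by_contra hcon
    push_neg at hcon
    have hlt : ∀ j ∈ f.support.erase i₀, g i₀ < g j := by
      intro j hj
      have hj1 := Finset.mem_of_mem_erase hj
      have hj2 := Finset.ne_of_mem_erase hj
      exact lt_of_le_of_ne (hmin j hj1) (fun h => hcon j hj1 hj2 h.symm)
    have hrest : g i₀ < v (∑ j ∈ f.support.erase i₀, algebraMap K L (f.coeff j) * a ^ j) :=
      v.map_lt_sum (hg_ne_top i₀ hi₀) hlt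
    have htot : v (∑ i ∈ f.support, algebraMap K L (f.coeff i) * a ^ i) = g i₀ := by
      rw [← Finset.add_sum_erase _ _ hi₀]
      exact v.map_add_eq_of_lt_left hrest
    rw [hsum] at htot
    simp only [AddValuation.map_zero] at htot
    exact hg_ne_top i₀ hi₀ htot.symm
  obtain ⟨j, hjs, hji, hgj⟩ := hex
  -- a generic step: from equal values at q < p, extract the conclusion
  have key : ∀ p q : ℕ, p ∈ f.support → q ∈ f.support → q < p → g p = g q →
      ∃ n : ℕ, 0 < n ∧ ∃ k : K, k ≠ 0 ∧ v (a ^ n) = v (algebraMap K L k) := by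
    intro p q hp hq hqp hgpq
    set cp := algebraMap K L (f.coeff p) with hcp
    set cq := algebraMap K L (f.coeff q) with hcq
    have hcp0 : cp ≠ 0 := fun h =>
      Polynomial.mem_support_iff.mp hp ((algebraMap K L).injective (by rw [← hcp, h, map_zero]))
    have hcq0 : cq ≠ 0 := fun h =>
      Polynomial.mem_support_iff.mp hq ((algebraMap K L).injective (by rw [← hcq, h, map_zero]))
    have haq_ne : v (a ^ q) ≠ ⊤ := v.ne_top_iff.mpr (pow_ne_zero _ ha0)
    have hsplit : a ^ p = a ^ (p - q) * a ^ q := by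
      rw [← pow_add]
      congr 1
      omega
    have heq1 : (v cp + v (a ^ (p - q))) + v (a ^ q) = v cq + v (a ^ q) := by
      have h1 : v (cp * a ^ p) = v (cq * a ^ q) := hgpq
      rw [v.map_mul, v.map_mul] at h1
      rw [hsplit, v.map_mul] at h1
      rw [← add_assoc] at h1
      exact h1
    have heq2 : v cp + v (a ^ (p - q)) = v cq :=
      WithTop.add_right_cancel haq_ne heq1
    refine ⟨p - q, by omega, f.coeff q / f.coeff p, div_ne_zero
      (Polynomial.mem_support_iff.mp hq) (Polynomial.mem_support_iff.mp hp), ?_⟩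
    have hmapdiv : algebraMap K L (f.coeff q / f.coeff p) = cq * cp⁻¹ := by
      rw [div_eq_mul_inv, map_mul, map_inv₀, hcp, hcq]
    rw [hmapdiv]
    calc v (a ^ (p - q)) = v (a ^ (p - q)) + 0 := (add_zero _).symm
      _ = v (a ^ (p - q)) + v (cp * cp⁻¹) := by
          rw [mul_inv_cancel₀ hcp0, v.map_one]
      _ = v (a ^ (p - q)) + (v cp + v cp⁻¹) := by rw [v.map_mul]
      _ = (v cp + v (a ^ (p - q))) + v cp⁻¹ := by
          rw [← add_assoc, add_comm (v (a ^ (p - q))) (v cp)]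
      _ = v cq + v cp⁻¹ := by rw [heq2]
      _ = v (cq * cp⁻¹) := (v.map_mul _ _).symm
  rcases lt_or_gt_of_ne hji with h | h
  · exact key i₀ j hi₀ hjs h hgj.symm
  · exact key j i₀ hjs hi₀ h hgj

set_option maxHeartbeats 1000000 in
set_option synthInstance.maxHeartbeats 200000 in
/-- corrected Lemma 5.1: Let (K,v) be a valued field and L an
algebraically closed valued extension which is an algebraic closure of K(b).
Let a ∈ L \ K be strongly homogeneous over (K,v): a is separable-algebraic over K,
the extension of v from K to K(a) is unique (encoded: every valuation subring of L
inducing the valuation ring of v on K induces the valuation ring of v on K(a)), and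
v(a) = kras(a,K) = max{v(τa − σa) : σ,τ ∈ Gal(K), τa ≠ σa}.  Then for any d ∈ K and
any b with v(b − d − a) > v(b − d), the element a + d lies in the henselization of
K(b) with respect to every extension of v from K(a,b) to the algebraic closure of
K(b); the henselization is the decomposition field, so membership is encoded as:
a + d is fixed by every K(b)-automorphism of L preserving the valuation subring O
of the chosen extension.  (Additive valuation convention.) -/
theorem strongly_homogeneous_mem_henselization
    {K L : Type*} [Field K] [Field L] [Algebra K L] [IsAlgClosed L]
    {Γ : Type*} [AddCommGroup Γ] [LinearOrder Γ] [IsOrderedAddMonoid Γ]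
    (v : AddValuation L (WithTop Γ))
    (a b : L) (d : K)
    -- L is an algebraic closure of K(b):
    (hL : Algebra.IsAlgebraic (adjoin K {b} : IntermediateField K L) L)
    -- a ∈ K^sep \ K:
    (ha_int : IsIntegral K a) (ha_sep : IsSeparable K a)
    (ha_notin : a ∉ Set.range (algebraMap K L))
    -- the extension of v from K to K(a) is unique:
    (huniq : ∀ O : ValuationSubring L,
      (∀ c : K, algebraMap K L c ∈ O ↔ 0 ≤ v (algebraMap K L c)) →
      ∀ z : L, z ∈ (adjoin K {a} : IntermediateField K L) → (z ∈ O ↔ 0 ≤ v z))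
    -- v(a) = kras(a, K):
    (hkras_le : ∀ σ τ : L ≃ₐ[K] L, τ a ≠ σ a → v (τ a - σ a) ≤ v a)
    (hkras_eq : ∃ σ τ : L ≃ₐ[K] L, τ a ≠ σ a ∧ v (τ a - σ a) = v a)
    -- a is a homogeneous approximation of b via d:
    (hb : v (b - algebraMap K L d - a) > v (b - algebraMap K L d)) :
    -- conclusion: for every extension (valuation subring O of L) of v from K(a,b),
    -- a + d is fixed by the decomposition group of O over K(b):
    ∀ O : ValuationSubring L,
      (∀ z : L, z ∈ (adjoin K {a, b} : IntermediateField K L) → (z ∈ O ↔ 0 ≤ v z)) →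
      ∀ σ : L ≃ₐ[K] L,
        (∀ z : L, z ∈ (adjoin K {b} : IntermediateField K L) → σ z = z) →
        (∀ x : L, σ x ∈ O ↔ x ∈ O) →
        σ (a + algebraMap K L d) = a + algebraMap K L d := by
  classical
  intro O hO σ hfix hOs
  set d' := algebraMap K L d with hd'
  set c := b - d' with hc
  have hσd : σ d' = d' := σ.commutes d
  suffices hσa : σ a = a by rw [map_add, hσa, hσd]
  -- basic memberships
  have hbM : b ∈ (adjoin K {b} : IntermediateField K L) :=
    subset_adjoin K {b} rfl
  have hcM : c ∈ (adjoin K {b} : IntermediateField K L) :=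
    sub_mem hbM (IntermediateField.algebraMap_mem _ d)
  have hσc : σ c = c := hfix c hcM
  by_cases hca : c = a
  · rw [← hca, hσc]
  -- from now on c ≠ a
  have ha0 : a ≠ 0 := fun h => ha_notin ⟨0, by rw [map_zero, h]⟩
  have hvca : v c < v (c - a) := hb
  have hc0 : c ≠ 0 := by
    intro h
    rw [h] at hvca
    simp only [AddValuation.map_zero] at hvca
    exact not_top_lt hvca
  have hca0 : c - a ≠ 0 := sub_ne_zero_of_ne hca
  have hva : v a = v c := by
    have hvac : v c < v (a - c) := by rw [v.map_sub_swap a c]; exact hvca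
    exact v.map_eq_of_lt_sub hvac
  set w := O.valuation with hwdef
  -- memberships in K(a,b)
  have haA : a ∈ (adjoin K {a, b} : IntermediateField K L) :=
    subset_adjoin K {a, b} (Set.mem_insert a {b})
  have hbA : b ∈ (adjoin K {a, b} : IntermediateField K L) :=
    subset_adjoin K {a, b} (Set.mem_insert_of_mem a rfl)
  have hcA : c ∈ (adjoin K {a, b} : IntermediateField K L) :=
    sub_mem hbA (IntermediateField.algebraMap_mem _ d)
  -- valuation comparison lemmas
  have hvle : ∀ x y : L, y ≠ 0 → (0 ≤ v (x / y) ↔ v y ≤ v x) := by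
    intro x y hy
    have hxy : v x = v (x / y) + v y := by
      rw [← v.map_mul, div_mul_cancel₀ x hy]
    constructor
    · intro h
      calc v y = 0 + v y := (zero_add _).symm
        _ ≤ v (x / y) + v y := add_le_add_left h _
        _ = v x := hxy.symm
    · intro h
      by_contra hneg
      push_neg at hneg
      have hlt : v x < v y := by
        calc v x = v (x / y) + v y := hxy
          _ < 0 + v y := WithTop.add_lt_add_right (v.ne_top_iff.mpr hy) hneg
          _ = v y := zero_add _
      exact absurd h (not_le.mpr hlt)
  have hwle : ∀ x y : L, y ≠ 0 → (w x ≤ w y ↔ x / y ∈ O) := by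
    intro x y hy
    rw [← ValuationSubring.valuation_le_one_iff, map_div₀]
    exact (div_le_one₀ ((Valuation.pos_iff _).mpr hy)).symm
  have hbridge : ∀ x y : L, x ∈ (adjoin K {a, b} : IntermediateField K L) →
      y ∈ (adjoin K {a, b} : IntermediateField K L) → y ≠ 0 →
      (w x ≤ w y ↔ v y ≤ v x) := by
    intro x y hx hy hy0
    rw [hwle x y hy0, hO (x / y) (div_mem hx hy), hvle x y hy0]
  have hbridge_lt : ∀ x y : L, x ∈ (adjoin K {a, b} : IntermediateField K L) →
      y ∈ (adjoin K {a, b} : IntermediateField K L) → x ≠ 0 → y ≠ 0 →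
      (w x < w y ↔ v y < v x) := by
    intro x y hx hy hx0 hy0
    rw [lt_iff_not_ge, lt_iff_not_ge, hbridge y x hy hx hx0]
  -- σ preserves the w-comparisons
  have hOsle : ∀ x y : L, y ≠ 0 → (w (σ x) ≤ w (σ y) ↔ w x ≤ w y) := by
    intro x y hy0
    have hσy : σ y ≠ 0 := fun h => hy0 (by rw [← σ.symm_apply_apply y, h, map_zero])
    rw [hwle _ _ hσy, hwle _ _ hy0,
      show σ x / σ y = σ (x / y) from (map_div₀ σ x y).symm]
    exact hOs _
  have hOslt : ∀ x y : L, x ≠ 0 → y ≠ 0 → (w (σ x) < w (σ y) ↔ w x < w y) := by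
    intro x y hx0 hy0
    have hσx : σ x ≠ 0 := fun h => hx0 (by rw [← σ.symm_apply_apply x, h, map_zero])
    rw [lt_iff_not_ge, lt_iff_not_ge, hOsle y x hx0]
  -- the key strict inequality:  w(σ a - a) < w a
  have hwca : w (c - a) < w c := (hbridge_lt (c - a) c (sub_mem hcA haA) hcA hca0 hc0).mpr hvca
  have hwa : w a = w c :=
    le_antisymm ((hbridge a c haA hcA hc0).mpr hva.ge) ((hbridge c a hcA haA ha0).mpr hva.le)
  have hwσca : w (c - σ a) < w c := by
    have h1 : w (σ (c - a)) < w (σ c) := (hOslt _ _ hca0 hc0).mpr hwca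
    rwa [map_sub, hσc] at h1
  -- suppose σ a ≠ a and derive a contradiction
  by_contra hσa
  have hσa0 : σ a ≠ 0 := fun h => ha0 (by rw [← σ.symm_apply_apply a, h, map_zero])
  have hwsa : w (σ a - a) < w a := by
    have hdecomp : σ a - a = (c - a) - (c - σ a) := by ring
    have h1 : w (σ a - a) ≤ max (w (c - a)) (w (c - σ a)) := by
      rw [hdecomp]; exact Valuation.map_sub w _ _
    calc w (σ a - a) ≤ max (w (c - a)) (w (c - σ a)) := h1
      _ < w c := max_lt hwca hwσca
      _ = w a := hwa.symm
  -- the minimal polynomial of a over M := K(b)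
  set M := (adjoin K {b} : IntermediateField K L) with hM
  haveI : IsAlgClosure (↥M) L := ⟨inferInstance, hL⟩
  haveI hnormal : Normal (↥M) L := IsAlgClosure.normal (↥M) L
  have haM : IsIntegral (↥M) a := ha_int.tower_top
  set F := minpoly (↥M) a with hF
  have hFmonic : F.Monic := minpoly.monic haM
  have hF0 : F ≠ 0 := minpoly.ne_zero haM
  have hFsep : F.Separable := by
    have hdvd : F ∣ (minpoly K a).map (algebraMap K (↥M)) :=
      minpoly.dvd_map_of_isScalarTower K (↥M) a
    exact (Polynomial.Separable.map ha_sep).of_dvd hdvd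
  have hsplits : (F.map (algebraMap (↥M) L)).Splits := IsAlgClosed.splits _
  set R := F.aroots L with hR
  have haR : a ∈ R := by
    rw [hR, Polynomial.mem_aroots]
    exact ⟨hF0, minpoly.aeval _ _⟩
  -- σ a is also a root of F
  have hσF : Polynomial.aeval (σ a) F = 0 := by
    have hcomp : (σ : L →+* L).comp (algebraMap (↥M) L) = algebraMap (↥M) L := by
      ext m
      exact hfix (algebraMap (↥M) L m) m.2
    have h1 := Polynomial.hom_eval₂ F (algebraMap (↥M) L) (σ : L →+* L) a
    rw [hcomp] at h1
    have h2 : Polynomial.eval₂ (algebraMap (↥M) L) a F = 0 := minpoly.aeval _ _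
    have h3 : (σ : L →+* L) a = σ a := rfl
    rw [Polynomial.aeval_def, ← h3, ← h1, h2, map_zero]
  have hσaR : σ a ∈ R := by
    rw [hR, Polynomial.mem_aroots]
    exact ⟨hF0, hσF⟩
  have hnodup : R.Nodup := by
    have hsep' : (F.map (algebraMap (↥M) L)).Separable := hFsep.map
    rw [hR]
    exact Polynomial.nodup_roots hsep'
  -- w(τ a) = w a for every K-automorphism τ, via uniqueness of the extension to K(a)
  obtain ⟨n, hn, k, hk0, hvk⟩ := exists_pow_val_eq v ha_int ha0
  set k' := algebraMap K L k with hk'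
  have hk'0 : k' ≠ 0 := fun h => hk0 ((algebraMap K L).injective (by rw [← hk', h, map_zero]))
  set u := a ^ n * k'⁻¹ with hu
  have hmonoA : (adjoin K {a} : IntermediateField K L) ≤ adjoin K {a, b} :=
    IntermediateField.adjoin.mono K _ _ (Set.singleton_subset_iff.mpr (Set.mem_insert a {b}))
  have huadj : u ∈ (adjoin K {a} : IntermediateField K L) :=
    mul_mem (pow_mem (subset_adjoin K {a} rfl) n) (inv_mem (IntermediateField.algebraMap_mem _ k))
  have hu0 : u ≠ 0 := mul_ne_zero (pow_ne_zero _ ha0) (inv_ne_zero hk'0)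
  have hvk'top : v k' ≠ ⊤ := v.ne_top_iff.mpr hk'0
  have hvu : v u = 0 := by
    rw [hu, v.map_mul, hvk, v.map_inv]
    exact LinearOrderedAddCommGroupWithTop.add_neg_cancel_of_ne_top hvk'top
  have hvuinv : 0 ≤ v u⁻¹ := by rw [v.map_inv, hvu, neg_zero]
  have hwu : w u = 1 := by
    have h1 : u ∈ O := (hO u (hmonoA huadj)).mpr hvu.ge
    have h2 : u⁻¹ ∈ O := (hO u⁻¹ (hmonoA (inv_mem huadj))).mpr hvuinv
    refine le_antisymm ((ValuationSubring.valuation_le_one_iff O u).mpr h1) ?_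
    have h3 := (ValuationSubring.valuation_le_one_iff O u⁻¹).mpr h2
    rw [map_inv₀] at h3
    exact (inv_le_one₀ ((Valuation.pos_iff _).mpr hu0)).mp h3
  have hwconj : ∀ τ : L ≃ₐ[K] L, w (τ a) = w a := by
    intro τ
    have hτ0 : ∀ x : L, x ≠ 0 → τ x ≠ 0 := fun x hx h =>
      hx (by rw [← τ.symm_apply_apply x, h, map_zero])
    have hcomap : ∀ cK : K, algebraMap K L cK ∈ O.comap (τ : L →+* L) ↔
        0 ≤ v (algebraMap K L cK) := by
      intro cK
      rw [ValuationSubring.mem_comap,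
        show (τ : L →+* L) (algebraMap K L cK) = algebraMap K L cK from τ.commutes cK]
      exact hO _ (hmonoA (IntermediateField.algebraMap_mem _ cK))
    have happ := huniq (O.comap (τ : L →+* L)) hcomap
    have h1 : τ u ∈ O := by
      have h := (happ u huadj).mpr hvu.ge
      rwa [ValuationSubring.mem_comap] at h
    have h2 : τ u⁻¹ ∈ O := by
      have h := (happ u⁻¹ (inv_mem huadj)).mpr hvuinv
      rwa [ValuationSubring.mem_comap] at h
    have hτu0 : τ u ≠ 0 := hτ0 u hu0
    have hwτu : w (τ u) = 1 := by
      refine le_antisymm ((ValuationSubring.valuation_le_one_iff O _).mpr h1) ?_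
      have h3 := (ValuationSubring.valuation_le_one_iff O _).mpr h2
      rw [show τ u⁻¹ = (τ u)⁻¹ from map_inv₀ τ u, map_inv₀] at h3
      exact (inv_le_one₀ ((Valuation.pos_iff _).mpr hτu0)).mp h3
    have hτu : τ u = (τ a) ^ n * k'⁻¹ := by
      rw [hu, map_mul, map_pow, map_inv₀, hk', τ.commutes k]
    have e1 : w a ^ n * (w k')⁻¹ = 1 := by
      rw [← map_pow, ← map_inv₀, ← w.map_mul, ← hu]
      exact hwu
    have e2 : w (τ a) ^ n * (w k')⁻¹ = 1 := by
      rw [← map_pow, ← map_inv₀, ← w.map_mul, ← hτu]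
      exact hwτu
    have hwk'0 : (w k')⁻¹ ≠ 0 := inv_ne_zero ((Valuation.ne_zero_iff _).mpr hk'0)
    have e3 : w (τ a) ^ n = w a ^ n := mul_right_cancel₀ hwk'0 (e2.trans e1.symm)
    exact (pow_left_inj₀ zero_le' zero_le' hn.ne').mp e3
  -- all roots of F have the same w-value as a
  have hroot_aut : ∀ x ∈ R, ∃ τ : L ≃ₐ[K] L, τ a = x := by
    intro x hx
    have hxroot : Polynomial.aeval x F = 0 := (Polynomial.mem_aroots.mp (hR ▸ hx)).2
    obtain ⟨τ, hτ⟩ := minpoly.exists_algEquiv_of_root' (K := ↥M) haM.isAlgebraic hxroot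
    exact ⟨τ.restrictScalars K, hτ⟩
  have hwroots : ∀ x ∈ R, w x = w a := by
    intro x hx
    obtain ⟨τ, hτ⟩ := hroot_aut x hx
    rw [← hτ]
    exact hwconj τ
  have hvroots : ∀ x ∈ R, x ≠ a → v (a - x) ≤ v a := by
    intro x hx hxa
    obtain ⟨τ, hτ⟩ := hroot_aut x hx
    have hne : (AlgEquiv.refl : L ≃ₐ[K] L) a ≠ τ a := by
      rw [hτ, AlgEquiv.coe_refl, id_eq]
      exact hxa.symm
    have h := hkras_le τ AlgEquiv.refl hne
    rwa [AlgEquiv.coe_refl, id_eq, hτ] at h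
  -- the derivative of F evaluated at a
  have hder : Polynomial.aeval a (Polynomial.derivative F) =
      ((R.erase a).map (fun x => a - x)).prod := by
    rw [hR, Polynomial.aeval_def, ← Polynomial.eval_map, ← Polynomial.derivative_map]
    exact hsplits.eval_root_derivative (hFmonic.map _) (show a ∈ F.aroots L from hR ▸ haR)
  set P := Polynomial.aeval a (Polynomial.derivative F) with hP
  have hPadj : P ∈ (adjoin K {a, b} : IntermediateField K L) := by
    have h1 : P ∈ Algebra.adjoin (↥M) {a} := Polynomial.aeval_mem_adjoin_singleton _ _
    have h2 : P ∈ (adjoin (↥M) {a} : IntermediateField (↥M) L) :=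
      IntermediateField.algebra_adjoin_le_adjoin _ _ h1
    have h3 : (adjoin (↥M) {a} : IntermediateField (↥M) L).restrictScalars K =
        adjoin K ({b} ∪ {a}) := adjoin_adjoin_left K {b} {a}
    have h4 : ({b} ∪ {a} : Set L) = {a, b} := by
      rw [Set.union_comm, Set.singleton_union]
    rw [h4] at h3
    rw [← h3]
    exact h2
  have hPne : P ≠ 0 := by
    rw [hder]
    apply Multiset.prod_ne_zero
    intro hmem
    obtain ⟨x, hx, hx0⟩ := Multiset.mem_map.mp hmem
    have hxa : x ≠ a := (hnodup.mem_erase_iff.mp hx).1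
    exact hxa (by linear_combination -hx0)
  -- v-side lower bound via the Krasner constant
  have hvP : v P ≤ v (a ^ Multiset.card (R.erase a)) := by
    rw [hder, addval_multiset_prod, v.map_pow]
    have hle : ∀ x ∈ ((R.erase a).map (fun x => a - x)).map (fun x => v x), x ≤ v a := by
      intro x hx
      obtain ⟨y, hy', rfl⟩ := Multiset.mem_map.mp hx
      obtain ⟨z, hz, rfl⟩ := Multiset.mem_map.mp hy'
      have hza : z ≠ a := (hnodup.mem_erase_iff.mp hz).1
      exact hvroots z (Multiset.mem_of_mem_erase hz) hza
    have h := Multiset.sum_le_card_nsmul _ _ hle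
    rwa [Multiset.card_map, Multiset.card_map] at h
  have hw_lower : w a ^ Multiset.card (R.erase a) ≤ w P := by
    have h := (hbridge (a ^ Multiset.card (R.erase a)) P (pow_mem haA _) hPadj hPne).mpr hvP
    rwa [map_pow] at h
  -- w-side strict upper bound
  have hw_upper : w P < w a ^ Multiset.card (R.erase a) := by
    have hwa0 : w a ≠ 0 := (Valuation.ne_zero_iff _).mpr ha0
    have hmemσ : σ a ∈ R.erase a := hnodup.mem_erase_iff.mpr ⟨hσa, hσaR⟩
    set t := (R.erase a).erase (σ a) with ht
    have hcons : (σ a) ::ₘ t = R.erase a := Multiset.cons_erase hmemσ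
    have hprod : w P = w (a - σ a) * w ((t.map (fun x => a - x)).prod) := by
      rw [hder, ← hcons, Multiset.map_cons, Multiset.prod_cons, w.map_mul]
    have hbound : w ((t.map (fun x => a - x)).prod) ≤ w a ^ Multiset.card t := by
      rw [show w ((t.map (fun x => a - x)).prod) =
          ((t.map (fun x => a - x)).map w).prod from map_multiset_prod w _]
      have h := Multiset.prod_le_pow_card ((t.map (fun x => a - x)).map w) (w a) ?_
      · rwa [Multiset.card_map, Multiset.card_map] at h
      · intro x hx
        obtain ⟨y, hy', rfl⟩ := Multiset.mem_map.mp hx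
        obtain ⟨z, hz, rfl⟩ := Multiset.mem_map.mp hy'
        have hzR : z ∈ R := Multiset.mem_of_mem_erase (Multiset.mem_of_mem_erase hz)
        calc w (a - z) ≤ max (w a) (w z) := Valuation.map_sub w _ _
          _ = w a := by rw [hwroots z hzR, max_self]
    have hstrict : w (a - σ a) < w a := by
      rw [Valuation.map_sub_swap]
      exact hwsa
    have hcard : Multiset.card t + 1 = Multiset.card (R.erase a) :=
      Multiset.card_erase_add_one hmemσ
    calc w P = w (a - σ a) * w ((t.map (fun x => a - x)).prod) := hprod
      _ = w ((t.map (fun x => a - x)).prod) * w (a - σ a) := mul_comm _ _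
      _ < w a ^ Multiset.card t * w a :=
          mul_lt_mul_of_le_of_lt_of_nonneg_of_pos hbound hstrict zero_le' (pos_iff_ne_zero.mpr (pow_ne_zero _ hwa0))
      _ = w a ^ (Multiset.card t + 1) := (pow_succ _ _).symm
      _ = w a ^ Multiset.card (R.erase a) := by rw [hcard]
  exact absurd hw_upper (not_lt.mpr hw_lower)
end
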